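/- Let A be a reduced Noetherian ring with total ring of fractions Q(A) and integral closure A̅ of A in Q(A). Then A̅ is a finitely generated A-module if and only if the conductor C = {a ∈ Q(A) : a·A̅ ⊆ A} contains a non-zerodivisor on A. -/

import Mathlib

set_option synthInstance.maxHeartbeats 1000000
set_option maxHeartbeats 1000000
/-- For a reduced Noetherian ring `A`, the integral closure `A̅` of `A` in its
total ring of fractions `Q(A)` is a finitely generated `A`-module iff the conductor
`C = {a ∈ Q(A) : a·A̅ ⊆ A}` contains a non-zerodivisor on `A`. -/
theorem conductor_nonzerodivisor_iff_finite
    (A : Type*) [CommRing A] [IsReduced A] [IsNoetherianRing A] :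
    Module.Finite A (integralClosure A (FractionRing A)) ↔
      ∃ p ∈ nonZeroDivisors A,
        ∀ b ∈ integralClosure A (FractionRing A),
          algebraMap A (FractionRing A) p * b ∈ Set.range (algebraMap A (FractionRing A)) := by
  set Q := FractionRing A
  constructor
  · intro h
    obtain ⟨s, hs⟩ := h.fg_top
    obtain ⟨⟨p, hp⟩, hpint⟩ := IsLocalization.exist_integer_multiples (nonZeroDivisors A)
      Finset.univ (fun i : s => (i : Q))
    refine ⟨p, hp, ?_⟩
    intro b hb
    have hb' : (⟨b, hb⟩ : integralClosure A Q) ∈ Submodule.span A (s : Set (integralClosure A Q)) := by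
      rw [hs]; trivial
    have hb'' : b ∈ Submodule.span A (((↑) : integralClosure A Q → Q) '' s) := by
      have := Submodule.mem_map_of_mem
        (f := (Subalgebra.toSubmodule (integralClosure A Q)).subtype) hb'
      rwa [Submodule.map_span] at this
    refine Submodule.span_induction (p := fun x _ => algebraMap A Q p * x ∈
        Set.range (algebraMap A Q)) ?_ ?_ ?_ ?_ hb''
    · rintro x ⟨⟨y, hy⟩, hys, rfl⟩
      obtain ⟨a, ha⟩ := hpint ⟨⟨y, hy⟩, hys⟩ (Finset.mem_univ _)
      exact ⟨a, by simpa [Algebra.smul_def] using ha⟩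
    · exact ⟨0, by simp⟩
    · rintro x y _ _ ⟨a, ha⟩ ⟨c, hc⟩
      exact ⟨a + c, by rw [map_add, ha, hc, mul_add]⟩
    · rintro a x _ ⟨c, hc⟩
      exact ⟨a * c, by rw [map_mul, hc, Algebra.smul_def]; ring⟩
  · rintro ⟨p, hp, hcond⟩
    have hinj : Function.Injective (algebraMap A Q) := IsFractionRing.injective A Q
    have hpu : IsUnit (algebraMap A Q p) := IsLocalization.map_units Q ⟨p, hp⟩
    let f : integralClosure A Q →ₗ[A] Q :=
      (LinearMap.mulLeft A (algebraMap A Q p)).comp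
        (Subalgebra.toSubmodule (integralClosure A Q)).subtype
    have hrange : ∀ b, f b ∈ LinearMap.range (Algebra.linearMap A Q) := by
      intro b
      obtain ⟨a, ha⟩ := hcond b b.2
      exact ⟨a, ha⟩
    let g : integralClosure A Q →ₗ[A] A :=
      ((LinearEquiv.ofInjective (Algebra.linearMap A Q) hinj).symm.toLinearMap).comp
        (f.codRestrict _ hrange)
    have key : ∀ x, algebraMap A Q (g x) = f x := by
      intro x
      have h1 := congrArg Subtype.val
        ((LinearEquiv.ofInjective (Algebra.linearMap A Q) hinj).apply_symm_apply
          (f.codRestrict _ hrange x))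
      exact h1
    have hg : Function.Injective g := by
      intro x y hxy
      have hfxy : f x = f y := by rw [← key, ← key, hxy]
      have : (x : Q) = (y : Q) := hpu.mul_left_cancel hfxy
      exact Subtype.ext this
    have : IsNoetherian A (integralClosure A Q) := isNoetherian_of_injective g hg
    exact Module.Finite.of_injective g hg
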